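/- Let (D1, M) be a periodic first-derivative SBP operator (M symmetric positive definite, M·D1 + D1ᵀ·M = 0) and D2 a periodic second-derivative SBP operator with the same mass matrix M (M·D2 = −A2, A2 symmetric positive semidefinite). Let u : ℝ → ℝ^m be differentiable and satisfy ∂ₜu = −(I − D2)⁻¹·D1·u for all t. Then the discrete energy u(t)ᵀ·M·(I − D2)·u(t) is constant in t. -/

import Mathlib

open Matrix

/-- The semidiscretization `∂ₜu = −(I − D2)⁻¹ D1 u` of the linear dispersive
equation, with periodic SBP operators `D1`, `D2` sharing a symmetric positive
definite mass matrix `M`, conserves the discrete energy `uᵀ·M·(I − D2)·u`. -/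
theorem linear_dispersive_conserves_energy
    (m : ℕ) (D1 D2 M A2 : Matrix (Fin m) (Fin m) ℝ)
    (hM : M.PosDef)
    (hD1 : M * D1 + D1ᵀ * M = 0)
    (hA2 : A2.PosSemidef)
    (hD2 : M * D2 = -A2)
    (u : ℝ → Fin m → ℝ)
    (hu : ∀ t, HasDerivAt u (-((1 - D2)⁻¹ *ᵥ (D1 *ᵥ u t))) t) :
    ∀ t₁ t₂ : ℝ,
      u t₁ ⬝ᵥ ((M * (1 - D2)) *ᵥ u t₁) = u t₂ ⬝ᵥ ((M * (1 - D2)) *ᵥ u t₂) := by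
  set B := M * (1 - D2) with hBdef
  have hMT : Mᵀ = M := hM.isHermitian.eq
  have hA2T : A2ᵀ = A2 := hA2.isHermitian.eq
  have hBsum : B = M + A2 := by
    rw [hBdef, Matrix.mul_sub, Matrix.mul_one, hD2, sub_neg_eq_add]
  have hBpd : (M + A2).PosDef := hM.add_posSemidef hA2
  have hdetB : B.det ≠ 0 := by
    rw [hBsum]; exact ne_of_gt hBpd.det_pos
  have hdet : IsUnit (1 - D2).det := by
    rw [hBdef, Matrix.det_mul] at hdetB
    exact isUnit_iff_ne_zero.mpr (right_ne_zero_of_mul hdetB)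
  have hmul : (1 - D2) * (1 - D2)⁻¹ = 1 := Matrix.mul_nonsing_inv _ hdet
  have hBsymm : Bᵀ = B := by
    rw [hBsum, Matrix.transpose_add, hMT, hA2T]
  have hanti : (M * D1)ᵀ = -(M * D1) := by
    rw [Matrix.transpose_mul, hMT]
    exact eq_neg_of_add_eq_zero_right hD1
  -- antisymmetric quadratic form vanishes
  have hzero : ∀ v : Fin m → ℝ, v ⬝ᵥ ((M * D1) *ᵥ v) = 0 := by
    intro v
    have h1 : v ⬝ᵥ ((M * D1) *ᵥ v) = ((M * D1)ᵀ *ᵥ v) ⬝ᵥ v := by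
      rw [Matrix.dotProduct_mulVec, Matrix.mulVec_transpose]
    rw [hanti, Matrix.neg_mulVec, neg_dotProduct, dotProduct_comm] at h1
    rw [dotProduct_comm]
    linarith
  have hderiv : ∀ t, HasDerivAt (fun s => u s ⬝ᵥ (B *ᵥ u s)) 0 t := by
    intro t
    have hcomp : ∀ i, HasDerivAt (fun s => u s i)
        ((-((1 - D2)⁻¹ *ᵥ (D1 *ᵥ u t))) i) t := fun i => (hasDerivAt_pi.mp (hu t)) i
    set v := u t with hv
    set w := -((1 - D2)⁻¹ *ᵥ (D1 *ᵥ v)) with hw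
    have hBw : B *ᵥ w = -(M *ᵥ (D1 *ᵥ v)) := by
      rw [hw, Matrix.mulVec_neg, Matrix.mulVec_mulVec, Matrix.mul_assoc, hmul,
        Matrix.mul_one]
    have key : w ⬝ᵥ (B *ᵥ v) + v ⬝ᵥ (B *ᵥ w) = 0 := by
      have hsym : w ⬝ᵥ (B *ᵥ v) = v ⬝ᵥ (B *ᵥ w) := by
        rw [Matrix.dotProduct_mulVec, ← Matrix.mulVec_transpose, hBsymm,
          dotProduct_comm]
      have h2 : v ⬝ᵥ (B *ᵥ w) = 0 := by
        rw [hBw, dotProduct_neg, Matrix.mulVec_mulVec] at *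
        rw [hzero v, neg_zero]
      rw [hsym, h2, add_zero]
    have hsums : HasDerivAt (fun s => ∑ i, ∑ j, u s i * B i j * u s j)
        (∑ i, ∑ j, (w i * B i j * v j + v i * B i j * w j)) t := by
      apply HasDerivAt.fun_sum
      intro i _
      apply HasDerivAt.fun_sum
      intro j _
      exact ((hcomp i).mul_const (B i j)).mul (hcomp j)
    have heq1 : (fun s => u s ⬝ᵥ (B *ᵥ u s)) = fun s => ∑ i, ∑ j, u s i * B i j * u s j := by
      funext s
      simp [dotProduct, Matrix.mulVec, Finset.mul_sum, mul_assoc]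
    have heq2 : (∑ i, ∑ j, (w i * B i j * v j + v i * B i j * w j))
        = w ⬝ᵥ (B *ᵥ v) + v ⬝ᵥ (B *ᵥ w) := by
      simp [dotProduct, Matrix.mulVec, Finset.mul_sum, Finset.sum_add_distrib,
        mul_assoc]
    rw [heq2, key] at hsums
    rw [heq1]
    exact hsums
  intro t₁ t₂
  exact is_const_of_deriv_eq_zero (fun t => (hderiv t).differentiableAt)
    (fun t => (hderiv t).deriv) t₁ t₂
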